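/- Let g : ℝ^δ → ℝ be differentiable and bounded with bounded radial derivative, and let h(x) = -∑_{j=1}^δ x_j ∂g/∂x_j. For ε > 0 set g_ε(x) = ε^{-δ} g(x/ε). If μ is a finite Borel measure on ℝ^δ, then for every x and ε > 0, ∂/∂ε [(g_ε * μ)(x)] = ε^{-1}((h_ε * μ)(x) − δ (g_ε * μ)(x)). -/

import Mathlib

open MeasureTheory Filter Real

noncomputable section

/-- Convolution of the rescaled kernel `g_ε(x) = ε^{-δ} g(x/ε)` against the measure `μ`. -/
def mconv (δ : ℕ) (g : EuclideanSpace ℝ (Fin δ) → ℝ) (ε : ℝ)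
    (μ : Measure (EuclideanSpace ℝ (Fin δ))) (x : EuclideanSpace ℝ (Fin δ)) : ℝ :=
  ∫ y, ε ^ (-(δ : ℝ)) * g (ε⁻¹ • (x - y)) ∂μ

/-- The negative of the radial derivative of `g`: `h(x) = -∑_j x_j ∂g/∂x_j`. -/
def negRad (δ : ℕ) (g : EuclideanSpace ℝ (Fin δ) → ℝ) (x : EuclideanSpace ℝ (Fin δ)) : ℝ :=
  -(fderiv ℝ g x x)

lemma negRad_measurable (δ : ℕ) (g : EuclideanSpace ℝ (Fin δ) → ℝ) :
    Measurable (negRad δ g) := by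
  have h1 : Measurable (fderiv ℝ g) := measurable_fderiv ℝ g
  have hc : Continuous fun p : (EuclideanSpace ℝ (Fin δ) →L[ℝ] ℝ) × EuclideanSpace ℝ (Fin δ) =>
      p.1 p.2 := isBoundedBilinearMap_apply.continuous
  have h2 : Measurable fun x => (fderiv ℝ g x) x :=
    hc.measurable.comp (h1.prodMk measurable_id)
  exact h2.neg

lemma integrable_of_bdd {α : Type*} [MeasurableSpace α] (μ : Measure α) [IsFiniteMeasure μ]
    {f : α → ℝ} (hm : AEStronglyMeasurable f μ) {C : ℝ} (hC : ∀ a, |f a| ≤ C) :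
    Integrable f μ :=
  ⟨hm, HasFiniteIntegral.of_bounded (ae_of_all _ fun a => by
    simpa [Real.norm_eq_abs] using hC a)⟩

theorem stmt0 (δ : ℕ) (g : EuclideanSpace ℝ (Fin δ) → ℝ)
    (hdiff : Differentiable ℝ g)
    (hbd : ∃ G, ∀ x, |g x| ≤ G)
    (hradbd : ∃ H, ∀ x, |negRad δ g x| ≤ H)
    (μ : Measure (EuclideanSpace ℝ (Fin δ))) [IsFiniteMeasure μ]
    (x : EuclideanSpace ℝ (Fin δ)) (ε : ℝ) (hε : 0 < ε) :
    HasDerivAt (fun e => mconv δ g e μ x)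
      (ε⁻¹ * (mconv δ (negRad δ g) ε μ x - δ * mconv δ g ε μ x)) ε := by
  obtain ⟨G, hG⟩ := hbd
  obtain ⟨H, hH⟩ := hradbd
  have hG0 : 0 ≤ G := le_trans (abs_nonneg _) (hG 0)
  have hH0 : 0 ≤ H := le_trans (abs_nonneg _) (hH 0)
  have hgc : Continuous g := hdiff.continuous
  set F : ℝ → EuclideanSpace ℝ (Fin δ) → ℝ :=
    fun e y => e ^ (-(δ : ℝ)) * g (e⁻¹ • (x - y)) with hFdef
  set F' : ℝ → EuclideanSpace ℝ (Fin δ) → ℝ :=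
    fun e y => e ^ (-(δ : ℝ) - 1) *
      (negRad δ g (e⁻¹ • (x - y)) - δ * g (e⁻¹ • (x - y))) with hF'def
  -- measurability helpers
  have hmeasg : ∀ e : ℝ, AEStronglyMeasurable (F e) μ := by
    intro e
    exact (continuous_const.mul
      (hgc.comp ((continuous_const.sub continuous_id).const_smul (e⁻¹ : ℝ)))).aestronglyMeasurable
  have hmeasF' : AEStronglyMeasurable (F' ε) μ := by
    have h1 : Measurable fun y : EuclideanSpace ℝ (Fin δ) =>
        negRad δ g (ε⁻¹ • (x - y)) :=
      (negRad_measurable δ g).comp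
        ((continuous_const.sub continuous_id).const_smul (ε⁻¹ : ℝ)).measurable
    have h2 : Measurable fun y : EuclideanSpace ℝ (Fin δ) => g (ε⁻¹ • (x - y)) :=
      (hgc.comp ((continuous_const.sub continuous_id).const_smul (ε⁻¹ : ℝ))).measurable
    exact (((h1.sub (h2.const_mul _)).const_mul _)).aestronglyMeasurable
  -- positivity in the ball
  have hball : ∀ e ∈ Metric.ball ε (ε / 2), ε / 2 < e := by
    intro e he
    rw [Metric.mem_ball, Real.dist_eq, abs_lt] at he
    linarith [he.1]
  have hεhalf : (0 : ℝ) < ε / 2 := by linarith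
  -- bound
  set bound : EuclideanSpace ℝ (Fin δ) → ℝ :=
    fun _ => (ε / 2) ^ (-(δ : ℝ) - 1) * (H + δ * G) with hbdef
  have h_bound : ∀ᵐ y ∂μ, ∀ e ∈ Metric.ball ε (ε / 2), ‖F' e y‖ ≤ bound y := by
    refine ae_of_all _ fun y e he => ?_
    have hepos : 0 < e := lt_trans hεhalf (hball e he)
    have h1 : |F' e y| ≤ e ^ (-(δ : ℝ) - 1) * (H + δ * G) := by
      rw [hF'def, abs_mul, abs_of_pos (Real.rpow_pos_of_pos hepos _)]
      refine mul_le_mul_of_nonneg_left ?_ (le_of_lt (Real.rpow_pos_of_pos hepos _))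
      calc |negRad δ g (e⁻¹ • (x - y)) - δ * g (e⁻¹ • (x - y))|
          ≤ |negRad δ g (e⁻¹ • (x - y))| + |(δ : ℝ) * g (e⁻¹ • (x - y))| := abs_sub _ _
        _ ≤ H + δ * G := by
            refine add_le_add (hH _) ?_
            rw [abs_mul, abs_of_nonneg (Nat.cast_nonneg δ)]
            exact mul_le_mul_of_nonneg_left (hG _) (Nat.cast_nonneg δ)
    have h2 : e ^ (-(δ : ℝ) - 1) ≤ (ε / 2) ^ (-(δ : ℝ) - 1) :=
      Real.rpow_le_rpow_of_nonpos hεhalf (le_of_lt (hball e he))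
        (by have : (0:ℝ) ≤ (δ:ℝ) := Nat.cast_nonneg δ; linarith)
    calc ‖F' e y‖ = |F' e y| := Real.norm_eq_abs _
      _ ≤ e ^ (-(δ : ℝ) - 1) * (H + δ * G) := h1
      _ ≤ bound y := mul_le_mul_of_nonneg_right h2 (by positivity)
  have hbound_int : Integrable bound μ := integrable_const _
  -- differentiability
  have h_diff : ∀ᵐ y ∂μ, ∀ e ∈ Metric.ball ε (ε / 2),
      HasDerivAt (fun e => F e y) (F' e y) e := by
    refine ae_of_all _ fun y e he => ?_
    have hepos : 0 < e := lt_trans hεhalf (hball e he)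
    have hne : e ≠ 0 := ne_of_gt hepos
    set v := x - y with hv
    have h1 : HasDerivAt (fun e : ℝ => e ^ (-(δ : ℝ)))
        ((-(δ : ℝ)) * e ^ (-(δ : ℝ) - 1)) e :=
      Real.hasDerivAt_rpow_const (Or.inl hne)
    have h3 : HasDerivAt (fun e : ℝ => e⁻¹ • v) ((-(e ^ 2)⁻¹) • v) e :=
      (hasDerivAt_inv hne).smul_const v
    have h5 : HasDerivAt (fun e : ℝ => g (e⁻¹ • v))
        ((fderiv ℝ g (e⁻¹ • v)) ((-(e ^ 2)⁻¹) • v)) e :=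
      (hdiff (e⁻¹ • v)).hasFDerivAt.comp_hasDerivAt e h3
    have := h1.mul h5
    convert this using 1
    case e'_4 => rfl
    case e'_5 => rfl
    case e'_8 => rfl
    have hsm : ((-(e ^ 2)⁻¹) • v) = (-e⁻¹) • (e⁻¹ • v) := by
      rw [smul_smul]
      congr 1
      field_simp
    have happ : (fderiv ℝ g (e⁻¹ • v)) ((-(e ^ 2)⁻¹) • v)
        = (-e⁻¹) * (fderiv ℝ g (e⁻¹ • v)) (e⁻¹ • v) := by
      rw [hsm, (fderiv ℝ g (e⁻¹ • v)).map_smul, smul_eq_mul]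
    have hrp : e ^ (-(δ : ℝ) - 1) = e ^ (-(δ : ℝ)) * e⁻¹ := by
      rw [Real.rpow_sub hepos, Real.rpow_one, div_eq_mul_inv]
    rw [hF'def]
    simp only [happ, negRad, hrp]
    ring
  -- integrability of F ε
  have hF_int : Integrable (F ε) μ := by
    refine integrable_of_bdd μ (hmeasg ε) (C := ε ^ (-(δ : ℝ)) * G) fun y => ?_
    rw [hFdef, abs_mul, abs_of_pos (Real.rpow_pos_of_pos hε _)]
    exact mul_le_mul_of_nonneg_left (hG _) (le_of_lt (Real.rpow_pos_of_pos hε _))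
  have key := hasDerivAt_integral_of_dominated_loc_of_deriv_le (Metric.ball_mem_nhds ε hεhalf)
    (Eventually.of_forall hmeasg) hF_int hmeasF' h_bound hbound_int h_diff
  have hmain := key.2
  -- rewrite the integral of F' ε as the claimed value
  have hmg : Measurable fun y : EuclideanSpace ℝ (Fin δ) => g (ε⁻¹ • (x - y)) :=
    (hgc.comp ((continuous_const.sub continuous_id).const_smul (ε⁻¹ : ℝ))).measurable
  have hmn : Measurable fun y : EuclideanSpace ℝ (Fin δ) => negRad δ g (ε⁻¹ • (x - y)) :=
    (negRad_measurable δ g).comp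
      ((continuous_const.sub continuous_id).const_smul (ε⁻¹ : ℝ)).measurable
  have hintn : Integrable
      (fun y => ε ^ (-(δ : ℝ)) * negRad δ g (ε⁻¹ • (x - y))) μ := by
    refine integrable_of_bdd μ ((hmn.const_mul _).aestronglyMeasurable)
      (C := ε ^ (-(δ : ℝ)) * H) fun y => ?_
    rw [abs_mul, abs_of_pos (Real.rpow_pos_of_pos hε _)]
    exact mul_le_mul_of_nonneg_left (hH _) (le_of_lt (Real.rpow_pos_of_pos hε _))
  have hintg : Integrable
      (fun y => ε ^ (-(δ : ℝ)) * g (ε⁻¹ • (x - y))) μ := hF_int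
  have heq : (∫ y, F' ε y ∂μ)
      = ε⁻¹ * (mconv δ (negRad δ g) ε μ x - δ * mconv δ g ε μ x) := by
    have hrp : ε ^ (-(δ : ℝ) - 1) = ε⁻¹ * ε ^ (-(δ : ℝ)) := by
      rw [Real.rpow_sub hε, Real.rpow_one, div_eq_mul_inv]
      ring
    have : ∀ y, F' ε y = ε⁻¹ * (ε ^ (-(δ : ℝ)) * negRad δ g (ε⁻¹ • (x - y))
        - (δ : ℝ) * (ε ^ (-(δ : ℝ)) * g (ε⁻¹ • (x - y)))) := by
      intro y
      rw [hF'def]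
      simp only [hrp]
      ring
    rw [show (fun y => F' ε y) = fun y => ε⁻¹ *
        (ε ^ (-(δ : ℝ)) * negRad δ g (ε⁻¹ • (x - y))
        - (δ : ℝ) * (ε ^ (-(δ : ℝ)) * g (ε⁻¹ • (x - y)))) from funext this]
    rw [integral_const_mul, integral_sub hintn (hintg.const_mul _)]
    simp only [mconv, integral_const_mul]
  rw [← heq]
  exact hmain
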